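/- There exists a probability P on a finite set X and a probability P' compatible with P (i.e., P' is the pignistic transform of some belief function Bel with Bel ≤ P) such that the argmax of P' is disjoint from the argmax restricted to the support of P. -/

import Mathlib

open Finset

noncomputable def Pw : Fin 3 → ℝ := ![0, 1/2, 1/2]
noncomputable def Pfun (A : Finset (Fin 3)) : ℝ := ∑ x ∈ A, Pw x
noncomputable def mfun (B : Finset (Fin 3)) : ℝ :=
  if B = {0,1} then 1/2 else if B = {0,2} then 1/2 else 0

lemma ne12 : ({0,1} : Finset (Fin 3)) ≠ {0,2} := by decide

lemma mfun_split (B : Finset (Fin 3)) :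
    mfun B = (if B = ({0,1} : Finset (Fin 3)) then (1/2:ℝ) else 0)
      + (if B = ({0,2} : Finset (Fin 3)) then (1/2:ℝ) else 0) := by
  unfold mfun
  by_cases h1 : B = ({0,1} : Finset (Fin 3))
  · subst h1; simp [ne12]
  · by_cases h2 : B = ({0,2} : Finset (Fin 3)) <;> simp [h1, h2, ne12.symm]

lemma mdiv_split (B : Finset (Fin 3)) :
    mfun B / B.card = (if B = ({0,1} : Finset (Fin 3)) then (1/4:ℝ) else 0)
      + (if B = ({0,2} : Finset (Fin 3)) then (1/4:ℝ) else 0) := by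
  unfold mfun
  by_cases h1 : B = ({0,1} : Finset (Fin 3))
  · subst h1
    rw [show ({0,1} : Finset (Fin 3)).card = 2 by decide]
    simp [ne12]; norm_num
  · by_cases h2 : B = ({0,2} : Finset (Fin 3))
    · subst h2
      rw [show ({0,2} : Finset (Fin 3)).card = 2 by decide]
      simp [h1]; norm_num
    · simp [h1, h2]

lemma pig_eval (x : Fin 3) :
    (∑ B ∈ (Finset.univ : Finset (Fin 3)).powerset.filter (fun B => x ∈ B),
      mfun B / B.card)
    = (if x ∈ ({0,1} : Finset (Fin 3)) then (1/4:ℝ) else 0)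
      + (if x ∈ ({0,2} : Finset (Fin 3)) then (1/4:ℝ) else 0) := by
  simp only [mdiv_split, Finset.sum_add_distrib, Finset.sum_ite_eq',
    Finset.mem_filter, Finset.mem_powerset]
  simp

lemma Pfun_eq (A : Finset (Fin 3)) :
    Pfun A = (if (1:Fin 3) ∈ A then (1/2:ℝ) else 0)
      + (if (2:Fin 3) ∈ A then (1/2:ℝ) else 0) := by
  have : Pfun A = ∑ x ∈ (univ : Finset (Fin 3)), if x ∈ A then Pw x else 0 := by
    rw [Finset.sum_ite_mem, Finset.univ_inter, Pfun]
  rw [this, Fin.sum_univ_three]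
  simp [Pw]

theorem stmt13 :
    ∃ (n : ℕ) (P m : Finset (Fin n) → ℝ),
      (P ∅ = 0 ∧ P Finset.univ = 1 ∧ (∀ A, 0 ≤ P A) ∧
        ∀ A B : Finset (Fin n), Disjoint A B → P (A ∪ B) = P A + P B) ∧
      (m ∅ = 0 ∧ (∀ A, 0 ≤ m A) ∧
        ∑ A ∈ (Finset.univ : Finset (Fin n)).powerset, m A = 1) ∧
      (∀ A : Finset (Fin n), (∑ B ∈ A.powerset, m B) ≤ P A) ∧
      ∀ x : Fin n,
        (∀ y : Fin n,
          (∑ B ∈ (Finset.univ : Finset (Fin n)).powerset.filter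
              (fun B => y ∈ B), m B / B.card)
          ≤ ∑ B ∈ (Finset.univ : Finset (Fin n)).powerset.filter
              (fun B => x ∈ B), m B / B.card) →
        ¬ (0 < P {x} ∧ ∀ y : Fin n, 0 < P {y} → P {y} ≤ P {x}) := by
  refine ⟨3, Pfun, mfun, ⟨?_, ?_, ?_, ?_⟩, ⟨?_, ?_, ?_⟩, ?_, ?_⟩
  · simp [Pfun]
  · rw [Pfun, Fin.sum_univ_three]; norm_num [Pw, Matrix.cons_val_two, Matrix.cons_val_one]
  · intro A
    apply Finset.sum_nonneg
    intro i _
    fin_cases i <;> norm_num [Pw]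
  · intro A B h
    exact Finset.sum_union h
  · simp [mfun, show (∅ : Finset (Fin 3)) ≠ {0,1} by decide,
      show (∅ : Finset (Fin 3)) ≠ {0,2} by decide]
  · intro A
    unfold mfun
    split_ifs <;> norm_num
  · simp only [mfun_split, Finset.sum_add_distrib, Finset.sum_ite_eq',
      Finset.mem_powerset]
    norm_num
  · intro A
    simp only [mfun_split, Finset.sum_add_distrib, Finset.sum_ite_eq',
      Finset.mem_powerset, Pfun_eq]
    apply add_le_add
    · split_ifs with h1 h2
      · exact le_rfl
      · exact absurd (h1 (by decide : (1:Fin 3) ∈ ({0,1}:Finset (Fin 3)))) h2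
      · norm_num
      · exact le_rfl
    · split_ifs with h1 h2
      · exact le_rfl
      · exact absurd (h1 (by decide : (2:Fin 3) ∈ ({0,2}:Finset (Fin 3)))) h2
      · norm_num
      · exact le_rfl
  · intro x h hcon
    obtain ⟨hx, _⟩ := hcon
    have h0 := h 0
    rw [pig_eval, pig_eval] at h0
    fin_cases x
    · rw [Pfun_eq] at hx
      simp at hx
    · norm_num [Finset.mem_insert, Finset.mem_singleton, Fin.ext_iff] at h0
    · norm_num [Finset.mem_insert, Finset.mem_singleton, Fin.ext_iff] at h0
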